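/- Let N ≥ 1, M ≥ 2, K = N·M, and let P_1, …, P_N be pairwise disjoint subsets of Fin K with |P_j| = M for all j whose union is all of Fin K. Define f(w) = Σ_{j=1}^N ∏_{k ∈ P_j} w_k (operations in ZMod 2). Then for every nonempty S ⊆ Fin K, the joint influence of S on f satisfies Inf_S(f) ≥ 1/2^{M−1}. -/
import Mathlib


open Finset

/-- Indicator vector of a finite set of coordinates: `(𝟙_S)_k = 1` iff `k ∈ S`. -/
def indVec {K : ℕ} (S : Finset (Fin K)) : Fin K → ZMod 2 :=
  fun k => if k ∈ S then 1 else 0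

/-- Joint influence of the set `S` of coordinates on the Boolean function `f`:
the normalized count of inputs `w` for which flipping exactly the coordinates in `S`
changes the value of `f`. -/
def jointInf {K : ℕ} (S : Finset (Fin K)) (f : (Fin K → ZMod 2) → ZMod 2) : ℚ :=
  ((Finset.univ.filter fun w : Fin K → ZMod 2 => f (w + indVec S) ≠ f w).card : ℚ) / 2 ^ K

theorem stmt6 (N M K : ℕ) (hN : 1 ≤ N) (hM : 2 ≤ M) (hK : K = N * M)
    (P : Fin N → Finset (Fin K))
    (hdisj : ∀ i j, i ≠ j → Disjoint (P i) (P j))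
    (hcard : ∀ j, (P j).card = M)
    (hcover : (Finset.univ : Finset (Fin N)).biUnion P = Finset.univ)
    (f : (Fin K → ZMod 2) → ZMod 2)
    (hf : ∀ w, f w = ∑ j : Fin N, ∏ k ∈ P j, w k)
    (S : Finset (Fin K)) (hS : S.Nonempty) :
    jointInf S f ≥ 1 / 2 ^ (M - 1) := by
  classical
  set t := indVec S with htdef
  obtain ⟨k0, hk0S⟩ := hS
  have hk0' : k0 ∈ (Finset.univ : Finset (Fin N)).biUnion P := by
    rw [hcover]; exact mem_univ _
  obtain ⟨j, -, hk0Q⟩ := Finset.mem_biUnion.mp hk0'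
  set Q := P j with hQ
  obtain ⟨k1, hk1Q, hk1ne⟩ :=
    Finset.exists_mem_ne (by rw [hcard]; omega : 1 < Q.card) k0
  have ht0 : t k0 = 1 := by simp [htdef, indVec, hk0S]
  have hKM : M ≤ K := by
    rw [hK]; exact Nat.le_mul_of_pos_left M hN
  -- the outer constants
  set c : (Fin K → ZMod 2) → ZMod 2 :=
    fun a => ∑ i ∈ Finset.univ.erase j, ∏ k ∈ P i, a k with hc
  set c' : (Fin K → ZMod 2) → ZMod 2 :=
    fun a => ∑ i ∈ Finset.univ.erase j, ∏ k ∈ P i, (a k + t k) with hc'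
  -- decomposition of f
  have hdec : ∀ (a w : Fin K → ZMod 2), (∀ k, k ∉ Q → w k = a k) →
      f w = (∏ k ∈ Q, w k) + c a ∧ f (w + t) = (∏ k ∈ Q, (w k + t k)) + c' a := by
    intro a w hw
    have hout : ∀ i ∈ Finset.univ.erase j, ∀ k ∈ P i, w k = a k := by
      intro i hi k hk
      refine hw k fun hkQ => ?_
      exact (Finset.disjoint_left.mp (hdisj i j (Finset.ne_of_mem_erase hi)) hk) hkQ
    constructor
    · rw [hf, ← Finset.add_sum_erase _ _ (mem_univ j)]
      congr 1
      exact Finset.sum_congr rfl fun i hi =>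
        Finset.prod_congr rfl fun k hk => hout i hi k hk
    · rw [hf, ← Finset.add_sum_erase _ _ (mem_univ j)]
      simp only [Pi.add_apply]
      congr 1
      exact Finset.sum_congr rfl fun i hi =>
        Finset.prod_congr rfl fun k hk => by rw [hout i hi k hk]
  set π : (Fin K → ZMod 2) → (Fin K → ZMod 2) :=
    fun w k => if k ∈ Q then 0 else w k with hπ
  set F := Finset.univ.filter (fun w : Fin K → ZMod 2 => f (w + t) ≠ f w) with hF
  -- the key fiber lemma
  have key : ∀ a : Fin K → ZMod 2, (∀ k ∈ Q, a k = 0) →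
      2 ≤ (F.filter fun w => π w = a).card := by
    intro a ha
    -- extension of an inner pattern g by a
    have hext : ∀ g : Fin K → ZMod 2,
        π (fun k => if k ∈ Q then g k else a k) = a := by
      intro g
      funext k
      by_cases hk : k ∈ Q
      · simp [hπ, hk, (ha k hk).symm]
      · simp [hπ, hk]
    have h11 : (1:ZMod 2) + 1 = 0 := by decide
    have hcases : ∀ x : ZMod 2, x = 0 ∨ x = 1 := by decide
    have main : ∃ w1 ∈ F.filter (fun w => π w = a), ∃ w2 ∈ F.filter (fun w => π w = a), w1 ≠ w2 := by
      rcases hcases (c' a + c a) with hd | hd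
      · -- c' a = c a
        refine ⟨fun k => if k ∈ Q then 1 else a k, ?_,
                fun k => if k ∈ Q then 1 + t k else a k, ?_, ?_⟩
        · rw [Finset.mem_filter]
          refine ⟨Finset.mem_filter.mpr ⟨mem_univ _, ?_⟩, hext _⟩
          obtain ⟨h1, h2⟩ := hdec a _ (fun k hk => if_neg hk)
          rw [h1, h2]
          have hp1 : (∏ k ∈ Q, ((fun k => if k ∈ Q then (1:ZMod 2) else a k) k)) = 1 :=
            Finset.prod_eq_one fun k hk => by simp [hk]
          have hp2 : (∏ k ∈ Q, ((fun k => if k ∈ Q then (1:ZMod 2) else a k) k + t k)) = 0 :=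
            Finset.prod_eq_zero hk0Q (by simp [hk0Q, ht0, h11])
          rw [hp1, hp2]
          revert hd
          have : ∀ x y : ZMod 2, y + x = 0 → (0:ZMod 2) + y ≠ 1 + x := by decide
          exact this _ _
        · rw [Finset.mem_filter]
          refine ⟨Finset.mem_filter.mpr ⟨mem_univ _, ?_⟩, hext _⟩
          obtain ⟨h1, h2⟩ := hdec a _ (fun k hk => if_neg hk)
          rw [h1, h2]
          have hp1 : (∏ k ∈ Q, ((fun k => if k ∈ Q then 1 + t k else a k) k)) = 0 :=
            Finset.prod_eq_zero hk0Q (by simp [hk0Q, ht0, h11])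
          have hp2 : (∏ k ∈ Q, ((fun k => if k ∈ Q then 1 + t k else a k) k + t k)) = 1 := by
            refine Finset.prod_eq_one fun k hk => ?_
            have : ∀ x : ZMod 2, 1 + x + x = 1 := by decide
            simp [hk, this]
          rw [hp1, hp2]
          revert hd
          have : ∀ x y : ZMod 2, y + x = 0 → (1:ZMod 2) + y ≠ 0 + x := by decide
          exact this _ _
        · intro h
          have := congrFun h k0
          simp [hk0Q, ht0] at this
      · -- c' a = c a + 1
        refine ⟨fun k => if k ∈ Q then (if k = k0 then 1 else 0) else a k, ?_,
                fun k => if k ∈ Q then (if k = k1 then t k1 else 0) else a k, ?_, ?_⟩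
        · rw [Finset.mem_filter]
          refine ⟨Finset.mem_filter.mpr ⟨mem_univ _, ?_⟩, hext _⟩
          obtain ⟨h1, h2⟩ := hdec a _ (fun k hk => if_neg hk)
          rw [h1, h2]
          have hp1 : (∏ k ∈ Q, ((fun k => if k ∈ Q then (if k = k0 then (1:ZMod 2) else 0) else a k) k)) = 0 :=
            Finset.prod_eq_zero hk1Q (by simp [hk1Q, hk1ne])
          have hp2 : (∏ k ∈ Q, ((fun k => if k ∈ Q then (if k = k0 then (1:ZMod 2) else 0) else a k) k + t k)) = 0 :=
            Finset.prod_eq_zero hk0Q (by simp [hk0Q, ht0, h11])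
          rw [hp1, hp2]
          revert hd
          have : ∀ x y : ZMod 2, y + x = 1 → (0:ZMod 2) + y ≠ 0 + x := by decide
          exact this _ _
        · rw [Finset.mem_filter]
          refine ⟨Finset.mem_filter.mpr ⟨mem_univ _, ?_⟩, hext _⟩
          obtain ⟨h1, h2⟩ := hdec a _ (fun k hk => if_neg hk)
          rw [h1, h2]
          have hp1 : (∏ k ∈ Q, ((fun k => if k ∈ Q then (if k = k1 then t k1 else 0) else a k) k)) = 0 :=
            Finset.prod_eq_zero hk0Q (by simp [hk0Q, (Ne.symm hk1ne : k0 ≠ k1)])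
          have hp2 : (∏ k ∈ Q, ((fun k => if k ∈ Q then (if k = k1 then t k1 else 0) else a k) k + t k)) = 0 := by
            refine Finset.prod_eq_zero hk1Q ?_
            have : ∀ x : ZMod 2, x + x = 0 := by decide
            simp [hk1Q, this]
          rw [hp1, hp2]
          revert hd
          have : ∀ x y : ZMod 2, y + x = 1 → (0:ZMod 2) + y ≠ 0 + x := by decide
          exact this _ _
        · intro h
          have := congrFun h k0
          simp [hk0Q, Ne.symm hk1ne] at this
    obtain ⟨w1, hw1, w2, hw2, hne⟩ := main
    exact Finset.one_lt_card.mpr ⟨w1, hw1, w2, hw2, hne⟩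
  -- Counting
  set T := Finset.univ.filter (fun a : Fin K → ZMod 2 => ∀ k ∈ Q, a k = 0) with hT
  have hmaps : ∀ w ∈ F, π w ∈ T := by
    intro w _
    simp only [hT, Finset.mem_filter, mem_univ, true_and]
    intro k hk
    simp [hπ, hk]
  have hsum : F.card = ∑ a ∈ T, (F.filter fun w => π w = a).card :=
    Finset.card_eq_sum_card_fiberwise hmaps
  have hge : 2 * T.card ≤ F.card := by
    rw [hsum]
    calc 2 * T.card = ∑ _a ∈ T, 2 := by rw [Finset.sum_const, smul_eq_mul, mul_comm]
    _ ≤ ∑ a ∈ T, (F.filter fun w => π w = a).card :=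
      Finset.sum_le_sum fun a ha => key a (Finset.mem_filter.mp ha).2
  -- card of T
  have hTcard : 2 ^ (K - M) ≤ T.card := by
    set R := (Finset.univ : Finset (Fin K)) \ Q with hR
    have hRcard : R.card = K - M := by
      rw [hR, Finset.card_sdiff_of_subset (Finset.subset_univ _), Finset.card_univ,
        Fintype.card_fin, hcard]
    set e : ({k : Fin K // k ∈ R} → ZMod 2) → (Fin K → ZMod 2) :=
      fun b k => if h : k ∈ R then b ⟨k, h⟩ else 0 with he
    have hmap : ∀ b ∈ (Finset.univ : Finset ({k : Fin K // k ∈ R} → ZMod 2)), e b ∈ T := by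
      intro b _
      simp only [hT, Finset.mem_filter, mem_univ, true_and]
      intro k hk
      have : k ∉ R := by simp [hR, hk]
      simp [he, this]
    have hinj : Set.InjOn e ↑(Finset.univ : Finset ({k : Fin K // k ∈ R} → ZMod 2)) := by
      intro b1 _ b2 _ h
      funext x
      have := congrFun h x.1
      simpa [he, x.2] using this
    have := Finset.card_le_card_of_injOn e hmap hinj
    rw [Finset.card_univ, Fintype.card_fun, Fintype.card_coe, hRcard, ZMod.card] at this
    exact this
  have hFcard : (2 : ℕ) ^ (K - M + 1) ≤ F.card := by
    have : (2:ℕ) ^ (K - M + 1) = 2 * 2 ^ (K - M) := by ring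
    omega
  -- finish
  rw [ge_iff_le, jointInf, ← htdef, ← hF,
    div_le_div_iff₀ (by positivity) (by positivity)]
  have hsplit : (2:ℚ) ^ K = 2 ^ (K - M + 1) * 2 ^ (M - 1) := by
    rw [← pow_add]
    congr 1
    omega
  calc (1:ℚ) * 2 ^ K = 2 ^ (K - M + 1) * 2 ^ (M - 1) := by rw [one_mul, hsplit]
  _ ≤ (F.card : ℚ) * 2 ^ (M - 1) := by
      have : ((2:ℚ) ^ (K - M + 1)) ≤ (F.card : ℚ) := by exact_mod_cast hFcard
      exact mul_le_mul_of_nonneg_right this (by positivity)
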